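/- Let I be a closed ideal of a Banach algebra A having a bounded approximate identity (e_α) that is quasi-central for A (i.e., ‖a e_α − e_α a‖ → 0 for all a ∈ A). If A is approximately weakly amenable, then I is approximately weakly amenable. -/

import Mathlib

open ContinuousLinearMap Filter Topology

open ContinuousLinearMap Filter Topology

/-- A Banach `A`-bimodule: a complete normed `ℂ`-space with commuting continuous
left and right `A`-actions, jointly bounded and bilinear. -/
structure BBimod (A : Type) [NonUnitalNormedRing A] [NormedSpace ℂ A] where
  carrier : Type
  [grp : NormedAddCommGroup carrier]
  [mod : NormedSpace ℂ carrier]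
  [complete : CompleteSpace carrier]
  lsmul : A → carrier →L[ℂ] carrier
  rsmul : A → carrier →L[ℂ] carrier
  lsmul_add : ∀ a b, lsmul (a + b) = lsmul a + lsmul b
  rsmul_add : ∀ a b, rsmul (a + b) = rsmul a + rsmul b
  lsmul_smul : ∀ (c : ℂ) (a), lsmul (c • a) = c • lsmul a
  rsmul_smul : ∀ (c : ℂ) (a), rsmul (c • a) = c • rsmul a
  lsmul_mul : ∀ a b, lsmul (a * b) = (lsmul a).comp (lsmul b)
  rsmul_mul : ∀ a b, rsmul (a * b) = (rsmul b).comp (rsmul a)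
  lsmul_rsmul : ∀ a b, (lsmul a).comp (rsmul b) = (rsmul b).comp (lsmul a)
  bound : ∃ C : ℝ, ∀ a, ‖lsmul a‖ ≤ C * ‖a‖ ∧ ‖rsmul a‖ ≤ C * ‖a‖

attribute [instance] BBimod.grp BBimod.mod BBimod.complete

variable {A : Type} [NonUnitalNormedRing A] [NormedSpace ℂ A]

/-- The dual of a Banach bimodule, with the canonical dual actions
`⟨u, Λ·a⟩ = ⟨a·u, Λ⟩` and `⟨u, a·Λ⟩ = ⟨u·a, Λ⟩`. -/
noncomputable def BBimod.dual (M : BBimod A) : BBimod A where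
  carrier := M.carrier →L[ℂ] ℂ
  lsmul a := (compL ℂ M.carrier M.carrier ℂ).flip (M.rsmul a)
  rsmul a := (compL ℂ M.carrier M.carrier ℂ).flip (M.lsmul a)
  lsmul_add a b := by ext Λ x; simp [M.rsmul_add]
  rsmul_add a b := by ext Λ x; simp [M.lsmul_add]
  lsmul_smul c a := by ext Λ x; simp [M.rsmul_smul]
  rsmul_smul c a := by ext Λ x; simp [M.lsmul_smul]
  lsmul_mul a b := by ext Λ x; simp [M.rsmul_mul]
  rsmul_mul a b := by ext Λ x; simp [M.lsmul_mul]
  lsmul_rsmul a b := by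
    ext Λ x
    have h : M.lsmul b (M.rsmul a x) = M.rsmul a (M.lsmul b x) := by
      have := congrArg (fun T : M.carrier →L[ℂ] M.carrier => T x) (M.lsmul_rsmul b a)
      simpa using this
    simp [h]
  bound := by
    obtain ⟨C, hC⟩ := M.bound
    refine ⟨C, fun a => ⟨?_, ?_⟩⟩
    · refine opNorm_le_bound _ ?_ fun Λ => ?_
      · exact le_trans (norm_nonneg _) (hC a).2
      · calc ‖Λ.comp (M.rsmul a)‖ ≤ ‖Λ‖ * ‖M.rsmul a‖ := opNorm_comp_le _ _
          _ ≤ (C * ‖a‖) * ‖Λ‖ := by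
              rw [mul_comm]
              exact mul_le_mul_of_nonneg_right (hC a).2 (norm_nonneg _)
    · refine opNorm_le_bound _ ?_ fun Λ => ?_
      · exact le_trans (norm_nonneg _) (hC a).1
      · calc ‖Λ.comp (M.lsmul a)‖ ≤ ‖Λ‖ * ‖M.lsmul a‖ := opNorm_comp_le _ _
          _ ≤ (C * ‖a‖) * ‖Λ‖ := by
              rw [mul_comm]
              exact mul_le_mul_of_nonneg_right (hC a).1 (norm_nonneg _)

variable (A) [IsScalarTower ℂ A A] [SMulCommClass ℂ A A] [CompleteSpace A]

/-- `A` as a Banach bimodule over itself. -/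
noncomputable def BBimod.base : BBimod A where
  carrier := A
  lsmul a := ContinuousLinearMap.mul ℂ A a
  rsmul a := (ContinuousLinearMap.mul ℂ A).flip a
  lsmul_add a b := by ext x; simp [add_mul]
  rsmul_add a b := by ext x; simp [mul_add]
  lsmul_smul c a := by ext x; simp [smul_mul_assoc]
  rsmul_smul c a := by ext x; simp [mul_smul_comm]
  lsmul_mul a b := by ext x; simp [mul_assoc]
  rsmul_mul a b := by ext x; simp [mul_assoc]
  lsmul_rsmul a b := by ext x; simp [mul_assoc]
  bound := by
    refine ⟨1, fun a => ⟨?_, ?_⟩⟩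
    · simpa using ContinuousLinearMap.opNorm_mul_apply_le ℂ A a
    · refine le_trans (opNorm_le_bound _ (norm_nonneg a) fun x => ?_) (by simp)
      simpa [mul_comm] using norm_mul_le x a


/-- The `n`-th dual `A^(n)` of `A` as a Banach `A`-bimodule. -/
noncomputable def iterDual : ℕ → BBimod A
  | 0 => BBimod.base A
  | n + 1 => (iterDual n).dual

variable {A}

/-- `D` is a derivation from `A` into the Banach bimodule `M`. -/
def IsDerivation (M : BBimod A) (D : A →L[ℂ] M.carrier) : Prop :=
  ∀ a b : A, D (a * b) = M.lsmul a (D b) + M.rsmul b (D a)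

/-- `D` is an inner derivation. -/
def IsInner (M : BBimod A) (D : A →L[ℂ] M.carrier) : Prop :=
  ∃ x : M.carrier, ∀ a : A, D a = M.lsmul a x - M.rsmul a x

/-- `D` is approximately inner: there is a net `(x_i)` in `M` with
`D a = lim_i (a·x_i − x_i·a)` for every `a`. -/
def IsApproxInner (M : BBimod A) (D : A →L[ℂ] M.carrier) : Prop :=
  ∃ (ι : Type) (l : Filter ι) (x : ι → M.carrier), l.NeBot ∧
    ∀ a : A, Tendsto (fun i => M.lsmul a (x i) - M.rsmul a (x i)) l (𝓝 (D a))

variable (A)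

/-- `A` is weakly amenable. -/
def WeaklyAmenable : Prop :=
  ∀ D : A →L[ℂ] (iterDual A 1).carrier, IsDerivation (iterDual A 1) D → IsInner (iterDual A 1) D

/-- `A` is approximately `n`-weakly amenable. -/
def ApproxNWeaklyAmenable (n : ℕ) : Prop :=
  ∀ D : A →L[ℂ] (iterDual A n).carrier,
    IsDerivation (iterDual A n) D → IsApproxInner (iterDual A n) D

/-- `A` is `n`-weakly amenable. -/
def NWeaklyAmenable (n : ℕ) : Prop :=
  ∀ D : A →L[ℂ] (iterDual A n).carrier,
    IsDerivation (iterDual A n) D → IsInner (iterDual A n) D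

/-- `A` is approximately weakly amenable. -/
def ApproxWeaklyAmenable : Prop := ApproxNWeaklyAmenable A 1

/-- `A` is approximately amenable: every continuous derivation into the dual of a
Banach `A`-bimodule is approximately inner. -/
def ApproxAmenable : Prop :=
  ∀ (X : BBimod A) (D : A →L[ℂ] X.dual.carrier), IsDerivation X.dual D → IsApproxInner X.dual D
noncomputable instance NonUnitalSubalgebra.normedSpaceComplexOfNormed {A : Type}
    [NonUnitalNormedRing A] [NormedSpace ℂ A] (I : NonUnitalSubalgebra ℂ A) :
    NormedSpace ℂ I :=
  SubmoduleClass.toNormedSpace (R := ℂ) I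
variable (A : Type) [NonUnitalNormedRing A] [NormedSpace ℂ A]
  [IsScalarTower ℂ A A] [SMulCommClass ℂ A A] [CompleteSpace A]


set_option maxHeartbeats 1000000
set_option synthInstance.maxHeartbeats 1000000

section AuxUlim

/-- Generalized limit of a complex-valued net along an ultrafilter. -/
noncomputable def ulim {ι : Type} (U : Ultrafilter ι) (f : ι → ℂ) : ℂ :=
  limUnder (U : Filter ι) f

lemma tendsto_ulim {ι : Type} (U : Ultrafilter ι) {f : ι → ℂ} {C : ℝ}
    (hf : ∀ i, ‖f i‖ ≤ C) : Tendsto f U (𝓝 (ulim U f)) := by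
  have hc : IsCompact (Metric.closedBall (0:ℂ) C) := isCompact_closedBall _ _
  have hle : (Ultrafilter.map f U : Filter ℂ) ≤ 𝓟 (Metric.closedBall 0 C) := by
    rw [Ultrafilter.coe_map, Filter.le_principal_iff]
    exact Filter.mem_map.mpr (Filter.Eventually.of_forall (fun i => by
      simpa [Metric.mem_closedBall, dist_eq_norm] using hf i))
  obtain ⟨x, -, hx⟩ := hc.ultrafilter_le_nhds (Ultrafilter.map f U) hle
  exact tendsto_nhds_limUnder ⟨x, by rwa [Ultrafilter.coe_map] at hx⟩

lemma ulim_eq {ι : Type} (U : Ultrafilter ι) {f : ι → ℂ} {c : ℂ}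
    (h : Tendsto f U (𝓝 c)) : ulim U f = c :=
  tendsto_nhds_unique (tendsto_nhds_limUnder ⟨c, h⟩) h

end AuxUlim

/-- If `A` is approximately weakly amenable and a closed ideal `I` of `A` has a
bounded approximate identity that is quasi-central for `A`, then `I` is
approximately weakly amenable. -/
theorem ideal_approxWeaklyAmenable_of_quasiCentral_bai
    (I : NonUnitalSubalgebra ℂ A) (hclosed : IsClosed (I : Set A))
    [CompleteSpace ↥I]
    (hl : ∀ (a x : A), x ∈ I → a * x ∈ I) (hr : ∀ (a x : A), x ∈ I → x * a ∈ I)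
    (ι : Type) (l : Filter ι) (e : ι → A) (C : ℝ) (hne : l.NeBot)
    (he_mem : ∀ i, e i ∈ I) (he_bdd : ∀ i, ‖e i‖ ≤ C)
    (he_bai : ∀ x ∈ I, Tendsto (fun i => e i * x) l (𝓝 x) ∧
      Tendsto (fun i => x * e i) l (𝓝 x))
    (he_qc : ∀ a : A, Tendsto (fun i => a * e i - e i * a) l (𝓝 0))
    (hA : ApproxWeaklyAmenable A) :
    ApproxWeaklyAmenable ↥I := by
  intro D0 hD0
  let D : ↥I →L[ℂ] (↥I →L[ℂ] ℂ) := D0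
  have hDer : ∀ x y z : ↥I, D (x * y) z = D y (z * x) + D x (y * z) := by
    intro x y z
    have h2 := congrArg (fun T : ↥I →L[ℂ] ℂ => T z) (hD0 x y)
    exact h2
  obtain ⟨U, hUl⟩ := Filter.exists_ultrafilter_le l
  have hC0 : (0:ℝ) ≤ C := by
    obtain ⟨i⟩ := Filter.nonempty_of_neBot l
    exact (norm_nonneg (e i)).trans (he_bdd i)
  have hb : ∃ M : ℝ, 0 < M ∧ ∀ x : ↥I, ‖D x‖ ≤ M * ‖x‖ :=
    SemilinearMapClass.bound_of_continuous (σ₁₂ := RingHom.id ℂ)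
      (𝓕 := ↥I →L[ℂ] (↥I →L[ℂ] ℂ)) D D.continuous
  obtain ⟨M, hM0, hM⟩ := hb
  have hDnn : (0:ℝ) ≤ M := hM0.le
  have hm1 : ∀ (a : A) (k : ι), a * e k ∈ I := fun a k => hl a _ (he_mem k)
  have hm2 : ∀ (b : A) (i : ι), e i * b ∈ I := fun b i => hr b _ (he_mem i)
  have hDle : ∀ (x y : ↥I), ‖D x y‖ ≤ M * ‖x‖ * ‖y‖ := fun x y =>
    le_trans ((D x).le_opNorm y)
      (mul_le_mul_of_nonneg_right (hM x) (norm_nonneg y))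
  -- the approximants `q a k = D (a * e k)`
  set q : A → ι → (↥I →L[ℂ] ℂ) := fun a k => D ⟨a * e k, hm1 a k⟩ with hq
  have hqy : ∀ (a : A) (k : ι) (y : ↥I), ‖q a k y‖ ≤ M * C * ‖a‖ * ‖y‖ := by
    intro a k y
    have h2 : ‖(⟨a * e k, hm1 a k⟩ : ↥I)‖ ≤ ‖a‖ * C := by
      show ‖a * e k‖ ≤ ‖a‖ * C
      exact le_trans (norm_mul_le a (e k))
        (mul_le_mul_of_nonneg_left (he_bdd k) (norm_nonneg a))
    calc ‖q a k y‖ ≤ M * ‖(⟨a * e k, hm1 a k⟩ : ↥I)‖ * ‖y‖ := hDle _ y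
      _ ≤ M * (‖a‖ * C) * ‖y‖ :=
          mul_le_mul_of_nonneg_right (mul_le_mul_of_nonneg_left h2 hDnn) (norm_nonneg y)
      _ = M * C * ‖a‖ * ‖y‖ := by ring
  -- the extension `Db` of `D` to `A`, valued in `I*`
  set Db : A → ↥I → ℂ := fun a y => ulim U (fun k => q a k y) with hDbdef
  have hDbT : ∀ (a : A) (y : ↥I), Tendsto (fun k => q a k y) U (𝓝 (Db a y)) :=
    fun a y => tendsto_ulim U (fun k => hqy a k y)
  have hDb_le : ∀ (a : A) (y : ↥I), ‖Db a y‖ ≤ M * C * ‖a‖ * ‖y‖ := fun a y =>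
    le_of_tendsto (hDbT a y).norm (Filter.Eventually.of_forall (fun k => hqy a k y))
  have hDbLip : ∀ (a : A) (z w : ↥I), ‖Db a z - Db a w‖ ≤ M * C * ‖a‖ * ‖z - w‖ := by
    intro a z w
    refine le_of_tendsto ((hDbT a z).sub (hDbT a w)).norm
      (Filter.Eventually.of_forall (fun k => ?_))
    have h : q a k z - q a k w = q a k (z - w) := (map_sub (q a k) z w).symm
    rw [h]; exact hqy a k (z - w)
  have hDbAdd2 : ∀ (a : A) (z w : ↥I), Db a (z + w) = Db a z + Db a w := by
    intro a z w
    refine tendsto_nhds_unique (hDbT a (z + w)) ?_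
    exact ((hDbT a z).add (hDbT a w)).congr (fun k => (map_add (q a k) z w).symm)
  have hDbSmul2 : ∀ (a : A) (c : ℂ) (z : ↥I), Db a (c • z) = c • Db a z := by
    intro a c z
    refine tendsto_nhds_unique (hDbT a (c • z)) ?_
    exact ((hDbT a z).const_smul c).congr (fun k => (map_smul (q a k) c z).symm)
  have hDbAdd1 : ∀ (a a' : A) (y : ↥I), Db (a + a') y = Db a y + Db a' y := by
    intro a a' y
    refine tendsto_nhds_unique (hDbT (a + a') y) ?_
    refine ((hDbT a y).add (hDbT a' y)).congr (fun k => ?_)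
    have harg : (⟨(a + a') * e k, hm1 _ k⟩ : ↥I) = ⟨a * e k, hm1 a k⟩ + ⟨a' * e k, hm1 a' k⟩ :=
      Subtype.ext (add_mul a a' (e k))
    show q a k y + q a' k y = q (a + a') k y
    simp only [hq]
    rw [harg, map_add]
    rfl
  have hDbSmul1 : ∀ (c : ℂ) (a : A) (y : ↥I), Db (c • a) y = c • Db a y := by
    intro c a y
    refine tendsto_nhds_unique (hDbT (c • a) y) ?_
    refine ((hDbT a y).const_smul c).congr (fun k => ?_)
    have harg : (⟨(c • a) * e k, hm1 _ k⟩ : ↥I) = c • (⟨a * e k, hm1 a k⟩ : ↥I) :=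
      Subtype.ext (smul_mul_assoc c a (e k))
    show c • q a k y = q (c • a) k y
    simp only [hq]
    rw [harg, map_smul]
    rfl
  -- `Db` extends `D`
  have hDbI : ∀ (x y : ↥I), Db (↑x) y = D x y := by
    intro x y
    refine tendsto_nhds_unique (hDbT (↑x) y) ?_
    rw [tendsto_iff_norm_sub_tendsto_zero]
    have hn : Tendsto (fun k => ‖(x:A) * e k - ↑x‖) l (𝓝 0) :=
      tendsto_iff_norm_sub_tendsto_zero.mp (he_bai ↑x x.2).2
    have hb : Tendsto (fun k => M * ‖(x:A) * e k - ↑x‖ * ‖y‖) l (𝓝 0) := by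
      simpa using (hn.const_mul M).mul_const ‖y‖
    refine squeeze_zero_norm (fun k => ?_) (hb.mono_left hUl)
    rw [norm_norm]
    have heq : q (↑x) k y - D x y = D (⟨(x:A) * e k, hm1 (↑x) k⟩ - x) y := by
      rw [map_sub]; rfl
    rw [heq]
    exact le_trans (hDle _ y) (le_of_eq rfl)
  -- quasi-centrality: `D (e m * a)` has the same limit behaviour as `q a m`
  have hD' : ∀ (a : A) (z : ↥I),
      Tendsto (fun m => D ⟨e m * a, hm2 a m⟩ z) U (𝓝 (Db a z)) := by
    intro a z
    have h0 : Tendsto (fun m => D ⟨e m * a, hm2 a m⟩ z - q a m z) U (𝓝 0) := by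
      have hn : Tendsto (fun m => ‖a * e m - e m * a‖) l (𝓝 0) := by
        simpa using (he_qc a).norm
      have hb : Tendsto (fun m => M * ‖a * e m - e m * a‖ * ‖z‖) l (𝓝 0) := by
        simpa using (hn.const_mul M).mul_const ‖z‖
      refine squeeze_zero_norm (fun m => ?_) (hb.mono_left hUl)
      have heq : D ⟨e m * a, hm2 a m⟩ z - q a m z
          = D (⟨e m * a, hm2 a m⟩ - ⟨a * e m, hm1 a m⟩) z := by
        rw [map_sub]; rfl
      rw [heq]
      refine le_trans (hDle _ z) (le_of_eq ?_)
      have : ‖(⟨e m * a, hm2 a m⟩ - ⟨a * e m, hm1 a m⟩ : ↥I)‖ = ‖a * e m - e m * a‖ := by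
        show ‖e m * a - a * e m‖ = ‖a * e m - e m * a‖
        exact norm_sub_rev _ _
      rw [this]
    have h1 := h0.add (hDbT a z)
    simpa [sub_add_cancel] using h1
  -- key identity: `D (a x) = D x (· a) + Db a (x ·)`
  have hL2 : ∀ (a : A) (x y : ↥I),
      D ⟨a * ↑x, hl a ↑x x.2⟩ y = D x ⟨(y:A) * a, hr a ↑y y.2⟩ + Db a (x * y) := by
    intro a x y
    have hA1 : Tendsto (fun m => D ⟨e m * (a * ↑x), hm2 _ m⟩ y) U
        (𝓝 (D ⟨a * ↑x, hl a ↑x x.2⟩ y)) := by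
      rw [tendsto_iff_norm_sub_tendsto_zero]
      have hn : Tendsto (fun m => ‖e m * (a * ↑x) - a * ↑x‖) l (𝓝 0) :=
        tendsto_iff_norm_sub_tendsto_zero.mp (he_bai (a * ↑x) (hl a ↑x x.2)).1
      have hb : Tendsto (fun m => M * ‖e m * (a * ↑x) - a * ↑x‖ * ‖y‖) l (𝓝 0) := by
        simpa using (hn.const_mul M).mul_const ‖y‖
      refine squeeze_zero_norm (fun m => ?_) (hb.mono_left hUl)
      rw [norm_norm]
      have heq : D ⟨e m * (a * ↑x), hm2 _ m⟩ y - D ⟨a * ↑x, hl a ↑x x.2⟩ y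
          = D (⟨e m * (a * ↑x), hm2 _ m⟩ - ⟨a * ↑x, hl a ↑x x.2⟩) y := by
        rw [map_sub]; rfl
      rw [heq]
      exact le_trans (hDle _ y) (le_of_eq rfl)
    have hB : ∀ m, D ⟨e m * (a * ↑x), hm2 _ m⟩ y
        = D x (y * ⟨e m * a, hm2 a m⟩) + D ⟨e m * a, hm2 a m⟩ (x * y) := by
      intro m
      have h1 := hDer ⟨e m * a, hm2 a m⟩ x y
      have e1 : (⟨e m * a, hm2 a m⟩ * x : ↥I) = ⟨e m * (a * ↑x), hm2 _ m⟩ :=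
        Subtype.ext (mul_assoc (e m) a ↑x)
      rwa [e1] at h1
    have hC : Tendsto (fun m => D x (y * ⟨e m * a, hm2 a m⟩)) U
        (𝓝 (D x ⟨(y:A) * a, hr a ↑y y.2⟩)) := by
      rw [tendsto_iff_norm_sub_tendsto_zero]
      have hn : Tendsto (fun m => ‖(y:A) * e m - ↑y‖) l (𝓝 0) :=
        tendsto_iff_norm_sub_tendsto_zero.mp (he_bai ↑y y.2).2
      have hb : Tendsto (fun m => M * ‖x‖ * (‖(y:A) * e m - ↑y‖ * ‖a‖)) l (𝓝 0) := by
        simpa using (hn.mul_const ‖a‖).const_mul (M * ‖x‖)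
      refine squeeze_zero_norm (fun m => ?_) (hb.mono_left hUl)
      rw [norm_norm]
      have heq : D x (y * ⟨e m * a, hm2 a m⟩) - D x ⟨(y:A) * a, hr a ↑y y.2⟩
          = D x (y * ⟨e m * a, hm2 a m⟩ - ⟨(y:A) * a, hr a ↑y y.2⟩) :=
        ((D x).map_sub _ _).symm
      rw [heq]
      have hv : ‖(y * ⟨e m * a, hm2 a m⟩ - ⟨(y:A) * a, hr a ↑y y.2⟩ : ↥I)‖
          = ‖((y:A) * e m - ↑y) * a‖ := by
        show ‖(y:A) * (e m * a) - (y:A) * a‖ = ‖((y:A) * e m - ↑y) * a‖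
        rw [sub_mul, mul_assoc]
      calc ‖D x (y * ⟨e m * a, hm2 a m⟩ - ⟨(y:A) * a, hr a ↑y y.2⟩)‖
          ≤ M * ‖x‖ * ‖(y * ⟨e m * a, hm2 a m⟩ - ⟨(y:A) * a, hr a ↑y y.2⟩ : ↥I)‖ :=
            hDle x _
        _ = M * ‖x‖ * ‖((y:A) * e m - ↑y) * a‖ := by rw [hv]
        _ ≤ M * ‖x‖ * (‖(y:A) * e m - ↑y‖ * ‖a‖) :=
            mul_le_mul_of_nonneg_left (norm_mul_le _ _) (by positivity)
    exact tendsto_nhds_unique (hA1.congr hB) (hC.add (hD' a (x * y)))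
  -- `Db` is a derivation `A → I*`
  have hDbDer : ∀ (a b : A) (y : ↥I),
      Db (a * b) y = Db b ⟨(y:A) * a, hr a ↑y y.2⟩ + Db a ⟨b * ↑y, hl b ↑y y.2⟩ := by
    intro a b y
    refine tendsto_nhds_unique (hDbT (a * b) y) ?_
    have hPt : ∀ k, q (a * b) k y
        = q b k ⟨(y:A) * a, hr a ↑y y.2⟩ + Db a (⟨b * e k, hm1 b k⟩ * y) := by
      intro k
      have h1 := hL2 a ⟨b * e k, hm1 b k⟩ y
      have e1 : (⟨(a * b) * e k, hm1 (a * b) k⟩ : ↥I)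
          = ⟨a * (b * e k), hl a _ (hm1 b k)⟩ := Subtype.ext (mul_assoc a b (e k))
      show q (a * b) k y = _
      simp only [hq]
      rw [e1]
      exact h1
    have hT2 : Tendsto (fun k => Db a (⟨b * e k, hm1 b k⟩ * y)) U
        (𝓝 (Db a ⟨b * ↑y, hl b ↑y y.2⟩)) := by
      rw [tendsto_iff_norm_sub_tendsto_zero]
      have hn : Tendsto (fun k => ‖e k * ↑y - (y:A)‖) l (𝓝 0) :=
        tendsto_iff_norm_sub_tendsto_zero.mp (he_bai ↑y y.2).1
      have hb : Tendsto (fun k => M * C * ‖a‖ * (‖b‖ * ‖e k * ↑y - (y:A)‖)) l (𝓝 0) := by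
        simpa using (hn.const_mul ‖b‖).const_mul (M * C * ‖a‖)
      refine squeeze_zero_norm (fun k => ?_) (hb.mono_left hUl)
      rw [norm_norm]
      have hv : ‖(⟨b * e k, hm1 b k⟩ * y - ⟨b * ↑y, hl b ↑y y.2⟩ : ↥I)‖
          = ‖b * (e k * ↑y - (y:A))‖ := by
        show ‖(b * e k) * (y:A) - b * ↑y‖ = ‖b * (e k * ↑y - (y:A))‖
        rw [mul_sub, ← mul_assoc]
      calc ‖Db a (⟨b * e k, hm1 b k⟩ * y) - Db a ⟨b * ↑y, hl b ↑y y.2⟩‖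
          ≤ M * C * ‖a‖ * ‖(⟨b * e k, hm1 b k⟩ * y - ⟨b * ↑y, hl b ↑y y.2⟩ : ↥I)‖ :=
            hDbLip a _ _
        _ = M * C * ‖a‖ * ‖b * (e k * ↑y - (y:A))‖ := by rw [hv]
        _ ≤ M * C * ‖a‖ * (‖b‖ * ‖e k * ↑y - (y:A)‖) :=
            mul_le_mul_of_nonneg_left (norm_mul_le _ _) (by positivity)
    exact ((hDbT b _).add hT2).congr (fun k => (hPt k).symm)
  -- second stage: `Et : A → A*`
  set p : A → ι → ↥I := fun b i => ⟨e i * b, hm2 b i⟩ with hp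
  have hpnorm : ∀ b i, ‖p b i‖ ≤ C * ‖b‖ := by
    intro b i
    show ‖e i * b‖ ≤ C * ‖b‖
    exact le_trans (norm_mul_le _ _) (mul_le_mul_of_nonneg_right (he_bdd i) (norm_nonneg b))
  set Et : A → A → ℂ := fun a b => ulim U (fun i => Db a (p b i)) with hEt
  have hEtb : ∀ (a b : A) (i : ι), ‖Db a (p b i)‖ ≤ M * C * ‖a‖ * (C * ‖b‖) :=
    fun a b i => le_trans (hDb_le a (p b i))
      (mul_le_mul_of_nonneg_left (hpnorm b i) (by positivity))
  have hEtT : ∀ a b, Tendsto (fun i => Db a (p b i)) U (𝓝 (Et a b)) :=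
    fun a b => tendsto_ulim U (fun i => hEtb a b i)
  have hEt_le : ∀ a b, ‖Et a b‖ ≤ (M * C * C) * ‖a‖ * ‖b‖ := by
    intro a b
    have h := le_of_tendsto (hEtT a b).norm (Filter.Eventually.of_forall (hEtb a b))
    calc ‖Et a b‖ ≤ M * C * ‖a‖ * (C * ‖b‖) := h
      _ = (M * C * C) * ‖a‖ * ‖b‖ := by ring
  have hEtAdd2 : ∀ a b b', Et a (b + b') = Et a b + Et a b' := by
    intro a b b'
    refine tendsto_nhds_unique (hEtT a (b + b')) ?_
    refine ((hEtT a b).add (hEtT a b')).congr (fun i => ?_)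
    have hv : p (b + b') i = p b i + p b' i := Subtype.ext (mul_add (e i) b b')
    rw [hv, hDbAdd2]
  have hEtSmul2 : ∀ (a : A) (c : ℂ) (b : A), Et a (c • b) = c • Et a b := by
    intro a c b
    refine tendsto_nhds_unique (hEtT a (c • b)) ?_
    refine ((hEtT a b).const_smul c).congr (fun i => ?_)
    have hv : p (c • b) i = c • p b i := Subtype.ext (mul_smul_comm c (e i) b)
    rw [hv, hDbSmul2]
  have hEtAdd1 : ∀ a a' b, Et (a + a') b = Et a b + Et a' b := by
    intro a a' b
    refine tendsto_nhds_unique (hEtT (a + a') b) ?_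
    exact ((hEtT a b).add (hEtT a' b)).congr (fun i => (hDbAdd1 a a' (p b i)).symm)
  have hEtSmul1 : ∀ (c : ℂ) (a b : A), Et (c • a) b = c • Et a b := by
    intro c a b
    refine tendsto_nhds_unique (hEtT (c • a) b) ?_
    exact ((hEtT a b).const_smul c).congr (fun i => (hDbSmul1 c a (p b i)).symm)
  -- `Et` is a derivation `A → A*`
  have hEtDer : ∀ a b c : A, Et (a * b) c = Et b (c * a) + Et a (b * c) := by
    intro a b c
    refine tendsto_nhds_unique (hEtT (a * b) c) ?_
    have hPt : ∀ i, Db (a * b) (p c i)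
        = Db b (p (c * a) i) + Db a ⟨b * (e i * c), hl b _ (hm2 c i)⟩ := by
      intro i
      have h1 := hDbDer a b (p c i)
      have e1 : (⟨((p c i : ↥I) : A) * a, hr a _ (p c i).2⟩ : ↥I) = p (c * a) i :=
        Subtype.ext (mul_assoc (e i) c a)
      rw [e1] at h1
      exact h1
    have hT2 : Tendsto (fun i => Db a ⟨b * (e i * c), hl b _ (hm2 c i)⟩) U
        (𝓝 (Et a (b * c))) := by
      have h0 : Tendsto
          (fun i => Db a ⟨b * (e i * c), hl b _ (hm2 c i)⟩ - Db a (p (b * c) i)) U (𝓝 0) := by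
        have hn : Tendsto (fun i => ‖b * e i - e i * b‖) l (𝓝 0) := by
          simpa using (he_qc b).norm
        have hb : Tendsto (fun i => M * C * ‖a‖ * (‖b * e i - e i * b‖ * ‖c‖)) l (𝓝 0) := by
          simpa using (hn.mul_const ‖c‖).const_mul (M * C * ‖a‖)
        refine squeeze_zero_norm (fun i => ?_) (hb.mono_left hUl)
        have hv : ‖(⟨b * (e i * c), hl b _ (hm2 c i)⟩ - p (b * c) i : ↥I)‖
            = ‖(b * e i - e i * b) * c‖ := by
          show ‖b * (e i * c) - e i * (b * c)‖ = ‖(b * e i - e i * b) * c‖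
          rw [sub_mul, mul_assoc, mul_assoc]
        calc ‖Db a ⟨b * (e i * c), hl b _ (hm2 c i)⟩ - Db a (p (b * c) i)‖
            ≤ M * C * ‖a‖ * ‖(⟨b * (e i * c), hl b _ (hm2 c i)⟩ - p (b * c) i : ↥I)‖ :=
              hDbLip a _ _
          _ = M * C * ‖a‖ * ‖(b * e i - e i * b) * c‖ := by rw [hv]
          _ ≤ M * C * ‖a‖ * (‖b * e i - e i * b‖ * ‖c‖) :=
              mul_le_mul_of_nonneg_left (norm_mul_le _ _) (by positivity)
      have h1 := h0.add (hEtT a (b * c))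
      simpa [sub_add_cancel] using h1
    exact ((hEtT b (c * a)).add hT2).congr (fun i => (hPt i).symm)
  -- `Et` extends `D` on `I`
  have hEtI : ∀ (x y : ↥I), Et (↑x) (↑y) = D x y := by
    intro x y
    refine tendsto_nhds_unique (hEtT (↑x) (↑y)) ?_
    have hPt : ∀ i, Db (↑x) (p (↑y) i) = D x (p (↑y) i) := fun i => hDbI x _
    rw [tendsto_iff_norm_sub_tendsto_zero]
    have hn : Tendsto (fun i => ‖e i * ↑y - (y:A)‖) l (𝓝 0) :=
      tendsto_iff_norm_sub_tendsto_zero.mp (he_bai ↑y y.2).1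
    have hb : Tendsto (fun i => M * ‖x‖ * ‖e i * ↑y - (y:A)‖) l (𝓝 0) := by
      simpa using hn.const_mul (M * ‖x‖)
    refine squeeze_zero_norm (fun i => ?_) (hb.mono_left hUl)
    rw [norm_norm]
    rw [hPt i]
    have heq : D x (p (↑y) i) - D x y = D x (p (↑y) i - y) := ((D x).map_sub _ _).symm
    rw [heq]
    exact le_trans (hDle x _) (le_of_eq rfl)
  -- package `Et` as a continuous linear map
  let EtL : A →L[ℂ] (A →L[ℂ] ℂ) := LinearMap.mkContinuous
    { toFun := fun a => LinearMap.mkContinuous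
        { toFun := Et a
          map_add' := hEtAdd2 a
          map_smul' := fun c b => hEtSmul2 a c b }
        ((M * C * C) * ‖a‖) (fun b => hEt_le a b)
      map_add' := fun a a' => by
        ext b
        exact hEtAdd1 a a' b
      map_smul' := fun c a => by
        ext b
        exact hEtSmul1 c a b }
    (M * C * C)
    (fun a => LinearMap.mkContinuous_norm_le _ (by positivity) (fun b => hEt_le a b))
  have hEtLDer : IsDerivation (iterDual A 1) EtL := by
    intro a b
    show EtL (a * b) = (iterDual A 1).lsmul a (EtL b) + (iterDual A 1).rsmul b (EtL a)
    ext c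
    exact hEtDer a b c
  obtain ⟨κ, m, f, hm, hf⟩ := hA EtL hEtLDer
  -- restriction map `A* → I*`
  let inc : ↥I →L[ℂ] A := LinearMap.mkContinuous
    { toFun := Subtype.val, map_add' := fun _ _ => rfl, map_smul' := fun _ _ => rfl }
    1 (fun x => by simp; exact le_rfl)
  let R : (A →L[ℂ] ℂ) →L[ℂ] (↥I →L[ℂ] ℂ) := (ContinuousLinearMap.compL ℂ ↥I A ℂ).flip inc
  refine ⟨κ, m, fun j => R (f j), hm, ?_⟩
  intro a
  have h2 : Tendsto
      (fun j => R ((iterDual A 1).lsmul (↑a) (f j) - (iterDual A 1).rsmul (↑a) (f j)))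
      m (𝓝 (R (EtL ↑a))) := (R.continuous.tendsto _).comp (hf ↑a)
  have e2 : R (EtL ↑a) = D0 a := by
    apply ContinuousLinearMap.ext
    intro y
    exact hEtI a y
  have e1 : ∀ j, R ((iterDual A 1).lsmul (↑a) (f j) - (iterDual A 1).rsmul (↑a) (f j))
      = (iterDual ↥I 1).lsmul a (R (f j)) - (iterDual ↥I 1).rsmul a (R (f j)) := by
    intro j
    apply ContinuousLinearMap.ext
    intro y
    rfl
  rw [e2] at h2
  exact (h2.congr e1)
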